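/- Let M and Π be finite sets and U : M × Π → ℝ. Then the mixed-strategy game has a value: max over distributions Q on Π of min over distributions ξ on M of ∑_{μ,π} ξ(μ) Q(π) U(μ, π) equals min over ξ of max over Q of the same expression (von Neumann minimax for this payoff matrix). -/

import Mathlib

open Set Pointwise

section Aux

variable {M Pi : Type*} [Fintype M] [Fintype Pi] [Nonempty M] [Nonempty Pi]

/-- The uniform distribution shows the standard simplex is nonempty. -/
lemma stdSimplex_nonempty' : ((fun _ : M => (Fintype.card M : ℝ)⁻¹)) ∈ stdSimplex ℝ M := by
  constructor
  · intro μ; positivity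
  · simp [Finset.sum_const, Finset.card_univ]

/-- Standard basis vector. -/
noncomputable def sbv (μ : M) : M → ℝ := by
  classical exact fun ν => if ν = μ then 1 else 0

lemma sbv_nonneg (μ ν : M) : 0 ≤ sbv μ ν := by
  classical
  unfold sbv
  split <;> norm_num

lemma eq_sum_sbv (x : M → ℝ) : x = ∑ μ, x μ • sbv μ := by
  classical
  funext ν
  unfold sbv
  simp [mul_ite, Finset.sum_ite_eq']

/-- The payoff linear map `Q ↦ (μ ↦ ∑ π, Q π * U μ π)`. -/
noncomputable def payLM (U : M → Pi → ℝ) : (Pi → ℝ) →ₗ[ℝ] (M → ℝ) where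
  toFun Q μ := ∑ π, Q π * U μ π
  map_add' x y := by funext μ; simp [add_mul, Finset.sum_add_distrib]
  map_smul' c x := by funext μ; simp [Finset.mul_sum, mul_assoc]

/-- Theorem of the alternative for the matrix game. -/
lemma minimax_alternative (U : M → Pi → ℝ) (c : ℝ) :
    (∃ Q ∈ stdSimplex ℝ Pi, ∀ μ, c ≤ ∑ π, Q π * U μ π) ∨
    (∃ ξ ∈ stdSimplex ℝ M, ∀ Q ∈ stdSimplex ℝ Pi,
      ∑ μ, ξ μ * (∑ π, Q π * U μ π) < c) := by
  classical
  set A := payLM U with hA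
  set S : Set (M → ℝ) := (A '' stdSimplex ℝ Pi) + Iic (0 : M → ℝ) with hS
  by_cases hc : (fun _ : M => c) ∈ S
  · left
    obtain ⟨x, ⟨Q, hQ, rfl⟩, y, hy, hxy⟩ := hc
    refine ⟨Q, hQ, fun μ => ?_⟩
    have h1 : A Q μ + y μ = c := congrFun hxy μ
    have h2 : y μ ≤ 0 := hy μ
    have : c ≤ A Q μ := by linarith
    simpa [hA, payLM] using this
  · right
    have hconv : Convex ℝ S :=
      ((convex_stdSimplex ℝ Pi).linear_image A).add (convex_Iic 0)
    have hclosed : IsClosed S :=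
      IsClosed.add_left_of_isCompact isClosed_Iic
        ((isCompact_stdSimplex ℝ Pi).image A.continuous_of_finiteDimensional)
    obtain ⟨f, u, hfu, hub⟩ := geometric_hahn_banach_point_closed hconv hclosed hc
    -- the candidate (unnormalized) strategy
    set ξ0 : M → ℝ := fun μ => -f (sbv μ) with hξ0
    obtain ⟨Q0, hQ0⟩ : ∃ Q, Q ∈ stdSimplex ℝ Pi :=
      ⟨_, stdSimplex_nonempty' (M := Pi)⟩
    have hAQmem : ∀ Q ∈ stdSimplex ℝ Pi, A Q ∈ S := fun Q hQ =>
      ⟨A Q, ⟨Q, hQ, rfl⟩, 0, Set.mem_Iic.mpr le_rfl, add_zero _⟩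
    have hξ0nonneg : ∀ μ, 0 ≤ ξ0 μ := by
      intro μ
      by_contra hneg
      push_neg at hneg
      have hfpos : 0 < f (sbv μ) := by simpa [hξ0, neg_neg] using hneg
      set t : ℝ := (f (A Q0) - u) / f (sbv μ) + 1 with ht
      have htpos : 0 < t := by
        have h1 : u < f (A Q0) := hub _ (hAQmem Q0 hQ0)
        have h2 : 0 < (f (A Q0) - u) / f (sbv μ) := div_pos (by linarith) hfpos
        rw [ht]; linarith
      have hmem : A Q0 + (-(t • sbv μ)) ∈ S := by
        refine ⟨A Q0, ⟨Q0, hQ0, rfl⟩, -(t • sbv μ), ?_, rfl⟩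
        rw [Set.mem_Iic, ← neg_nonneg, neg_neg]
        intro ν
        have h9 := sbv_nonneg μ ν
        have : (0:ℝ) ≤ t * sbv μ ν := by positivity
        simpa using this
      have := hub _ hmem
      rw [map_add, map_neg, map_smul] at this
      have hts : t * f (sbv μ) = f (A Q0) - u + f (sbv μ) := by
        rw [ht, add_mul, one_mul, div_mul_cancel₀ _ hfpos.ne']
      simp only [smul_eq_mul, hts] at this
      linarith
    -- f x = -∑ μ, ξ0 μ * x μ
    have hf_eq : ∀ x : M → ℝ, f x = -∑ μ, ξ0 μ * x μ := by
      intro x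
      conv_lhs => rw [eq_sum_sbv x]
      rw [map_sum, ← Finset.sum_neg_distrib]
      refine Finset.sum_congr rfl fun μ _ => ?_
      rw [map_smul]
      simp only [smul_eq_mul, hξ0]
      ring
    set s : ℝ := ∑ μ, ξ0 μ with hs
    have hsnonneg : 0 ≤ s := Finset.sum_nonneg fun μ _ => hξ0nonneg μ
    have hspos : 0 < s := by
      rcases hsnonneg.lt_or_eq with h | h
      · exact h
      · exfalso
        have hzero : ∀ μ, ξ0 μ = 0 := by
          intro μ
          have := (Finset.sum_eq_zero_iff_of_nonneg
            (fun μ _ => hξ0nonneg μ)).mp h.symm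
          exact this μ (Finset.mem_univ μ)
        have h1 : f (fun _ : M => c) = 0 := by
          rw [hf_eq]; simp [hzero]
        have h2 : f (A Q0) = 0 := by
          rw [hf_eq]; simp [hzero]
        have h3 := hub _ (hAQmem Q0 hQ0)
        rw [h2] at h3; rw [h1] at hfu; linarith
    refine ⟨fun μ => s⁻¹ * ξ0 μ,
      ⟨fun μ => mul_nonneg (inv_nonneg.mpr hspos.le) (hξ0nonneg μ), ?_⟩, ?_⟩
    · rw [← Finset.mul_sum, ← hs, inv_mul_cancel₀ hspos.ne']
    · intro Q hQ
      have h1 : f (fun _ : M => c) = -(s * c) := by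
        rw [hf_eq, ← Finset.sum_mul]
      have h2 : f (A Q) = -∑ μ, ξ0 μ * (∑ π, Q π * U μ π) := by
        rw [hf_eq]; rfl
      have h3 := (hfu.trans (hub _ (hAQmem Q hQ)))
      rw [h1, h2] at h3
      have h4 : ∑ μ, ξ0 μ * (∑ π, Q π * U μ π) < s * c := by linarith
      calc ∑ μ, (s⁻¹ * ξ0 μ) * (∑ π, Q π * U μ π)
          = s⁻¹ * ∑ μ, ξ0 μ * (∑ π, Q π * U μ π) := by
            rw [Finset.mul_sum]; exact Finset.sum_congr rfl fun μ _ => by ring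
        _ < s⁻¹ * (s * c) := by
            exact (mul_lt_mul_iff_right₀ (by positivity)).mpr h4
        _ = c := by field_simp

end Aux

/-- von Neumann minimax theorem for the finite payoff matrix `U`:
the mixed-strategy game has a value, i.e. max over distributions `Q` on `Π` of the min over
distributions `ξ` on `M` of the bilinear payoff equals the min over `ξ` of the max over `Q`. -/
theorem stmt5 (M Pi : Type*) [Fintype M] [Fintype Pi] [Nonempty M] [Nonempty Pi]
    (U : M → Pi → ℝ) :
    (⨆ Q : {Q : Pi → ℝ // (∀ π, 0 ≤ Q π) ∧ ∑ π, Q π = 1},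
      ⨅ ξ : {ξ : M → ℝ // (∀ μ, 0 ≤ ξ μ) ∧ ∑ μ, ξ μ = 1},
        ∑ μ, ∑ π, ξ.1 μ * Q.1 π * U μ π) =
    (⨅ ξ : {ξ : M → ℝ // (∀ μ, 0 ≤ ξ μ) ∧ ∑ μ, ξ μ = 1},
      ⨆ Q : {Q : Pi → ℝ // (∀ π, 0 ≤ Q π) ∧ ∑ π, Q π = 1},
        ∑ μ, ∑ π, ξ.1 μ * Q.1 π * U μ π) := by
  classical
  set ΔM := {ξ : M → ℝ // (∀ μ, 0 ≤ ξ μ) ∧ ∑ μ, ξ μ = 1} with hΔM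
  set ΔP := {Q : Pi → ℝ // (∀ π, 0 ≤ Q π) ∧ ∑ π, Q π = 1} with hΔP
  set pay : ΔM → ΔP → ℝ := fun ξ Q => ∑ μ, ∑ π, ξ.1 μ * Q.1 π * U μ π with hpay
  have hΔMne : Nonempty ΔM := ⟨⟨_, stdSimplex_nonempty' (M := M)⟩⟩
  have hΔPne : Nonempty ΔP := ⟨⟨_, stdSimplex_nonempty' (M := Pi)⟩⟩
  set B : ℝ := ∑ μ, ∑ π, |U μ π| with hB
  have hbound : ∀ ξ Q, |pay ξ Q| ≤ B := by
    intro ξ Q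
    have h1 : |pay ξ Q| ≤ ∑ μ, ∑ π, |ξ.1 μ * Q.1 π * U μ π| :=
      (Finset.abs_sum_le_sum_abs _ _).trans
        (Finset.sum_le_sum fun μ _ => Finset.abs_sum_le_sum_abs _ _)
    refine h1.trans (Finset.sum_le_sum fun μ _ => Finset.sum_le_sum fun π _ => ?_)
    rw [abs_mul, abs_mul, abs_of_nonneg (ξ.2.1 μ), abs_of_nonneg (Q.2.1 π)]
    have hξ : ξ.1 μ ≤ 1 := by
      have h := Finset.single_le_sum (fun μ _ => ξ.2.1 μ) (Finset.mem_univ μ)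
      rwa [ξ.2.2] at h
    have hQ : Q.1 π ≤ 1 := by
      have h := Finset.single_le_sum (fun π _ => Q.2.1 π) (Finset.mem_univ π)
      rwa [Q.2.2] at h
    have h2 : ξ.1 μ * Q.1 π ≤ 1 := by nlinarith [ξ.2.1 μ, Q.2.1 π]
    nlinarith [abs_nonneg (U μ π), ξ.2.1 μ, Q.2.1 π]
  have hlow : ∀ ξ Q, -B ≤ pay ξ Q := fun ξ Q => neg_le_of_abs_le (hbound ξ Q)
  have hhigh : ∀ ξ Q, pay ξ Q ≤ B := fun ξ Q => le_of_abs_le (hbound ξ Q)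
  have hbddInf : ∀ Q, BddBelow (Set.range fun ξ => pay ξ Q) := fun Q =>
    ⟨-B, by rintro x ⟨ξ, rfl⟩; exact hlow ξ Q⟩
  have hbddSup : ∀ ξ, BddAbove (Set.range fun Q => pay ξ Q) := fun ξ =>
    ⟨B, by rintro x ⟨Q, rfl⟩; exact hhigh ξ Q⟩
  have hbddS : BddAbove (Set.range fun Q : ΔP => ⨅ ξ, pay ξ Q) := by
    refine ⟨B, ?_⟩
    rintro x ⟨Q, rfl⟩
    exact (ciInf_le (hbddInf Q) (Classical.arbitrary ΔM)).trans
      (hhigh _ Q)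
  have hbddI : BddBelow (Set.range fun ξ : ΔM => ⨆ Q, pay ξ Q) := by
    refine ⟨-B, ?_⟩
    rintro x ⟨ξ, rfl⟩
    exact (hlow ξ (Classical.arbitrary ΔP)).trans
      (le_ciSup (hbddSup ξ) (Classical.arbitrary ΔP))
  -- weak duality
  have hweak : (⨆ Q : ΔP, ⨅ ξ : ΔM, pay ξ Q) ≤ ⨅ ξ : ΔM, ⨆ Q : ΔP, pay ξ Q := by
    refine ciSup_le fun Q => le_ciInf fun ξ => ?_
    exact (ciInf_le (hbddInf Q) ξ).trans (le_ciSup (hbddSup ξ) Q)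
  refine le_antisymm hweak (le_of_not_gt fun hlt => ?_)
  set a := (⨆ Q : ΔP, ⨅ ξ : ΔM, pay ξ Q) with ha
  set b := (⨅ ξ : ΔM, ⨆ Q : ΔP, pay ξ Q) with hb2
  obtain ⟨c, hac, hcb⟩ := exists_between hlt
  rcases minimax_alternative U c with ⟨Q, hQ, hQc⟩ | ⟨ξ, hξ, hξc⟩
  · -- then a ≥ c : contradiction with a < c
    let hQ' : ΔP := ⟨Q, hQ.1, hQ.2⟩
    have h1 : c ≤ ⨅ ξ : ΔM, pay ξ hQ' := by
      refine le_ciInf fun ξ => ?_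
      have hpe : pay ξ hQ' = ∑ μ, ξ.1 μ * (∑ π, Q π * U μ π) := by
        refine Finset.sum_congr rfl fun μ _ => ?_
        rw [Finset.mul_sum]
        refine Finset.sum_congr rfl fun π _ => ?_
        show ξ.1 μ * Q π * U μ π = ξ.1 μ * (Q π * U μ π)
        ring
      rw [hpe]
      calc c = ∑ μ, ξ.1 μ * c := by
              rw [← Finset.sum_mul]; rw [ξ.2.2, one_mul]
        _ ≤ ∑ μ, ξ.1 μ * (∑ π, Q π * U μ π) :=
              Finset.sum_le_sum fun μ _ =>
                mul_le_mul_of_nonneg_left (hQc μ) (ξ.2.1 μ)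
    have h2 : (⨅ ξ : ΔM, pay ξ hQ') ≤ a := le_ciSup hbddS hQ'
    linarith
  · -- then b ≤ c : contradiction with c < b
    let hξ' : ΔM := ⟨ξ, hξ.1, hξ.2⟩
    have h1 : (⨆ Q : ΔP, pay hξ' Q) ≤ c := by
      refine ciSup_le fun Q => ?_
      have hpe : pay hξ' Q = ∑ μ, ξ μ * (∑ π, Q.1 π * U μ π) := by
        refine Finset.sum_congr rfl fun μ _ => ?_
        rw [Finset.mul_sum]
        refine Finset.sum_congr rfl fun π _ => ?_
        show ξ μ * Q.1 π * U μ π = ξ μ * (Q.1 π * U μ π)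
        ring
      rw [hpe]
      exact (hξc Q.1 ⟨Q.2.1, Q.2.2⟩).le
    have h2 : b ≤ ⨆ Q : ΔP, pay hξ' Q := ciInf_le hbddI hξ'
    linarith
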